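/- Let κ : Λ²V → 𝔤 be a bilinear alternating map, where V = 𝔤/𝔭 carries a grading V = V_{-k}⊕⋯⊕V_{-1} and 𝔤 carries a compatible filtration 𝔤^j with one-parameter groups a^t acting diagonally with a^t·v = e^{tλ_i}v on V_i and eigenvalue e^{tμ} on the weight-μ part of 𝔤. Suppose for each pair (i,j) with i,j < 0 and each weight ν of weight-level l > i+j there is a sequence (a_k) of such diagonal elements with (a_k·κ)(v,w) bounded while the relevant eigenvalue ratio e^{(α+β−ν)(X_k)} → 0; then the component of κ(v,w) in weight level l vanishes. If moreover κ satisfies the regularity condition κ(𝔤^i,𝔤^j) ⊆ 𝔤^{i+j+1} for i,j < 0, then κ = 0. -/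

import Mathlib

open Filter Bornology

/-- Abstract curvature-vanishing argument.  `κ : Λ²V → 𝔤` is an alternating
bilinear map, `V` graded by weights `α ∈ Wv` of negative level, `𝔤` decomposed by weights
`μ ∈ Wg` with projections `π μ` and level function `Lg`.  If for each `v, w` in graded
pieces of weights `α, β` and each 𝔤-weight `ν` of level `> Lg α + Lg β` there is a sequence
`X k` in the split torus's Lie algebra `𝔞` with the acted curvature
`∑_μ e^{(μ−α−β)(X k)} • π μ (κ v w)` bounded while `(α+β−ν)(X k) → −∞`, then
`π ν (κ v w) = 0`; if moreover `κ` is regular, i.e. `κ(𝔤^i,𝔤^j) ⊆ 𝔤^{i+j+1}` on negative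
pieces, then `κ = 0`. -/
theorem curvature_vanishing_by_contraction
    {𝔞 V 𝔤 : Type*} [AddCommGroup 𝔞] [Module ℝ 𝔞]
    [AddCommGroup V] [Module ℝ V]
    [NormedAddCommGroup 𝔤] [NormedSpace ℝ 𝔤] [FiniteDimensional ℝ 𝔤]
    (Wg : Finset (Module.Dual ℝ 𝔞)) (Lg : Module.Dual ℝ 𝔞 → ℤ)
    (π : Module.Dual ℝ 𝔞 → 𝔤 →ₗ[ℝ] 𝔤)
    (hπ_sum : ∀ x : 𝔤, ∑ μ ∈ Wg, π μ x = x)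
    (hπ_idem : ∀ μ ∈ Wg, ∀ x : 𝔤, π μ (π μ x) = π μ x)
    (hπ_orth : ∀ μ ∈ Wg, ∀ μ' ∈ Wg, μ ≠ μ' → ∀ x : 𝔤, π μ (π μ' x) = 0)
    (Wv : Finset (Module.Dual ℝ 𝔞)) (VS : Module.Dual ℝ 𝔞 → Submodule ℝ V)
    (hneg : ∀ α ∈ Wv, Lg α < 0)
    (hVspan : (⨆ α ∈ Wv, VS α) = ⊤)
    (κ : V →ₗ[ℝ] V →ₗ[ℝ] 𝔤)
    (halt : ∀ v w : V, κ v w = - κ w v)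
    (hseq : ∀ α ∈ Wv, ∀ β ∈ Wv, ∀ ν ∈ Wg, Lg α + Lg β < Lg ν →
      ∀ v ∈ VS α, ∀ w ∈ VS β, ∃ X : ℕ → 𝔞,
        IsBounded (Set.range fun k =>
          ∑ μ ∈ Wg, Real.exp (μ (X k) - (α (X k) + β (X k))) • π μ (κ v w)) ∧
        Tendsto (fun k => α (X k) + β (X k) - ν (X k)) atTop atBot)
    (hreg : ∀ α ∈ Wv, ∀ β ∈ Wv, ∀ v ∈ VS α, ∀ w ∈ VS β,
      κ v w ∈ ⨆ μ ∈ Wg.filter (fun μ => Lg α + Lg β + 1 ≤ Lg μ), LinearMap.range (π μ)) :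
    (∀ α ∈ Wv, ∀ β ∈ Wv, ∀ ν ∈ Wg, Lg α + Lg β < Lg ν →
      ∀ v ∈ VS α, ∀ w ∈ VS β, π ν (κ v w) = 0) ∧
    κ = 0 := by

  have part1 : ∀ α ∈ Wv, ∀ β ∈ Wv, ∀ ν ∈ Wg, Lg α + Lg β < Lg ν →
      ∀ v ∈ VS α, ∀ w ∈ VS β, π ν (κ v w) = 0 := by
    intro α hα β hβ ν hν hlt v hv w hw
    obtain ⟨X, hbdd, htend⟩ := hseq α hα β hβ ν hν hlt v hv w hw
    have hcomp : ∀ k, π ν (∑ μ ∈ Wg, Real.exp (μ (X k) - (α (X k) + β (X k))) • π μ (κ v w))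
        = Real.exp (ν (X k) - (α (X k) + β (X k))) • π ν (κ v w) := by
      intro k
      rw [map_sum, Finset.sum_eq_single ν]
      · rw [map_smul, hπ_idem ν hν]
      · intro μ hμ hμν
        rw [map_smul, hπ_orth ν hν μ hμ (Ne.symm hμν), smul_zero]
      · intro h; exact absurd hν h
    by_contra hne
    have hc : 0 < ‖π ν (κ v w)‖ := norm_pos_iff.mpr hne
    obtain ⟨C, hC⟩ := isBounded_iff_forall_norm_le.mp hbdd
    set T := LinearMap.toContinuousLinearMap (π ν) with hT
    have hnorm : ∀ k, Real.exp (ν (X k) - (α (X k) + β (X k))) * ‖π ν (κ v w)‖ ≤ ‖T‖ * C := by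
      intro k
      have h1 : ‖T (∑ μ ∈ Wg, Real.exp (μ (X k) - (α (X k) + β (X k))) • π μ (κ v w))‖
          ≤ ‖T‖ * C := by
        calc ‖T (∑ μ ∈ Wg, Real.exp (μ (X k) - (α (X k) + β (X k))) • π μ (κ v w))‖
            ≤ ‖T‖ * ‖∑ μ ∈ Wg, Real.exp (μ (X k) - (α (X k) + β (X k))) • π μ (κ v w)‖ :=
              T.le_opNorm _
          _ ≤ ‖T‖ * C := by
              apply mul_le_mul_of_nonneg_left (hC _ ⟨k, rfl⟩) (norm_nonneg T)
      have h2 : T (∑ μ ∈ Wg, Real.exp (μ (X k) - (α (X k) + β (X k))) • π μ (κ v w))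
          = Real.exp (ν (X k) - (α (X k) + β (X k))) • π ν (κ v w) := hcomp k
      rw [h2, norm_smul, Real.norm_eq_abs, abs_of_pos (Real.exp_pos _)] at h1
      exact h1
    have htend2 : Tendsto (fun k => ν (X k) - (α (X k) + β (X k))) atTop atTop := by
      have : (fun k => ν (X k) - (α (X k) + β (X k)))
          = fun k => -(α (X k) + β (X k) - ν (X k)) := by funext k; ring
      rw [this]
      exact tendsto_neg_atBot_atTop.comp htend
    have htend3 : Tendsto (fun k => Real.exp (ν (X k) - (α (X k) + β (X k))) * ‖π ν (κ v w)‖)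
        atTop atTop :=
      (Real.tendsto_exp_atTop.comp htend2).atTop_mul_const hc
    obtain ⟨k, hk⟩ := (htend3.eventually (eventually_gt_atTop (‖T‖ * C))).exists
    exact absurd (hnorm k) (not_le.mpr hk)
  refine ⟨part1, ?_⟩
  have hgr : ∀ α ∈ Wv, ∀ β ∈ Wv, ∀ v ∈ VS α, ∀ w ∈ VS β, κ v w = 0 := by
    intro α hα β hβ v hv w hw
    have hmem := hreg α hα β hβ v hv w hw
    have hall : ∀ μ ∈ Wg, π μ (κ v w) = 0 := by
      intro μ hμ
      by_cases hle : Lg α + Lg β < Lg μ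
      · exact part1 α hα β hβ μ hμ hle v hv w hw
      · have hker : (⨆ μ' ∈ Wg.filter (fun μ' => Lg α + Lg β + 1 ≤ Lg μ'),
            LinearMap.range (π μ')) ≤ LinearMap.ker (π μ) := by
          apply iSup_le; intro μ'; apply iSup_le; intro hμ'
          rw [Finset.mem_filter] at hμ'
          rintro _ ⟨x, rfl⟩
          have hne : μ ≠ μ' := by
            intro h; subst h; omega
          exact hπ_orth μ hμ μ' hμ'.1 hne x
        exact hker hmem
    have := hπ_sum (κ v w)
    rw [Finset.sum_congr rfl hall, Finset.sum_const_zero] at this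
    exact this.symm
  have h1 : ∀ v : V, ∀ β ∈ Wv, ∀ w ∈ VS β, κ v w = 0 := by
    intro v
    have hv : v ∈ ⨆ α ∈ Wv, VS α := hVspan ▸ Submodule.mem_top
    refine Submodule.iSup_induction _ (motive := fun v => ∀ β ∈ Wv, ∀ w ∈ VS β, κ v w = 0) hv
      ?_ ?_ ?_
    · intro α x hx β hβ w hw
      by_cases hα : α ∈ Wv
      · rw [iSup_pos hα] at hx
        exact hgr α hα β hβ x hx w hw
      · rw [iSup_neg hα] at hx
        simp [(Submodule.mem_bot ℝ).mp hx]
    · intro β hβ w hw; simp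
    · intro x y hx hy β hβ w hw
      rw [map_add, LinearMap.add_apply, hx β hβ w hw, hy β hβ w hw, add_zero]
  have h2 : ∀ v w : V, κ v w = 0 := by
    intro v w
    have hw : w ∈ ⨆ α ∈ Wv, VS α := hVspan ▸ Submodule.mem_top
    refine Submodule.iSup_induction _ (motive := fun w => κ v w = 0) hw ?_ ?_ ?_
    · intro β x hx
      by_cases hβ : β ∈ Wv
      · rw [iSup_pos hβ] at hx
        exact h1 v β hβ x hx
      · rw [iSup_neg hβ] at hx
        simp [(Submodule.mem_bot ℝ).mp hx]
    · simp
    · intro x y hx hy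
      rw [map_add, hx, hy, add_zero]
  ext v w
  simp [h2 v w]
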